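/- There exists a constant C such that for all x, u ∈ ℝ, ∫_1^∞ |∂K_t(x,u)/∂t| dt ≤ C e^{x²/2}. -/

import Mathlib

open Real MeasureTheory Set Filter Topology

/-- The Mehler kernel of the one-dimensional Ornstein--Uhlenbeck semigroup. -/
noncomputable def mehlerK (t x u : ℝ) : ℝ :=
  Real.exp (x ^ 2 / 2) / Real.sqrt (1 - Real.exp (-2 * t)) *
    Real.exp (-(Real.exp (-t) * u - x) ^ 2 / (2 * (1 - Real.exp (-2 * t))))

/-- Antiderivative of `v ↦ |v - x| * exp (-(v-x)^2/2)`. -/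
noncomputable def Psi (x v : ℝ) : ℝ :=
  if x ≤ v then 1 - Real.exp (-(v - x) ^ 2 / 2) else Real.exp (-(v - x) ^ 2 / 2) - 1

lemma abs_Psi_le (x v : ℝ) : |Psi x v| ≤ 1 := by
  have h1 : Real.exp (-(v - x) ^ 2 / 2) ≤ 1 := by
    rw [Real.exp_le_one_iff]; nlinarith [sq_nonneg (v - x)]
  have h2 : 0 < Real.exp (-(v - x) ^ 2 / 2) := Real.exp_pos _
  unfold Psi
  split <;> (rw [abs_le]; constructor <;> nlinarith)

lemma hasDerivAt_Psi (x v : ℝ) :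
    HasDerivAt (Psi x) (|v - x| * Real.exp (-(v - x) ^ 2 / 2)) v := by
  have hsm : ∀ w : ℝ, HasDerivAt (fun w => Real.exp (-(w - x) ^ 2 / 2))
      (Real.exp (-(v - x) ^ 2 / 2) * (-(2 * (v - x) ^ 1 * 1) / 2)) v := by
    intro w
    exact (((((hasDerivAt_id v).sub_const x).pow 2).neg).div_const 2).exp
  rcases lt_trichotomy x v with h | h | h
  · have hd : HasDerivAt (fun w => 1 - Real.exp (-(w - x) ^ 2 / 2))
        (-(Real.exp (-(v - x) ^ 2 / 2) * (-(2 * (v - x) ^ 1 * 1) / 2))) v :=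
      (hsm v).const_sub 1
    have he : Psi x =ᶠ[nhds v] fun w => 1 - Real.exp (-(w - x) ^ 2 / 2) := by
      filter_upwards [Ioi_mem_nhds h] with w hw
      simp [Psi, (le_of_lt hw : x ≤ w)]
    have := hd.congr_of_eventuallyEq he
    refine this.congr_deriv ?_
    rw [abs_of_pos (sub_pos.2 h)]; ring
  · subst h
    rw [hasDerivAt_iff_isLittleO]
    have hP0 : Psi x x = 0 := by simp [Psi]
    rw [Asymptotics.isLittleO_iff]
    intro c hc
    filter_upwards [eventually_abs_sub_lt x (by linarith : (0:ℝ) < 2 * c)] with w hw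
    have hb : |Psi x w| ≤ (w - x) ^ 2 / 2 := by
      have := Real.add_one_le_exp (-(w - x) ^ 2 / 2)
      have h2 : 0 < Real.exp (-(w - x) ^ 2 / 2) := Real.exp_pos _
      have h1 : Real.exp (-(w - x) ^ 2 / 2) ≤ 1 := by
        rw [Real.exp_le_one_iff]; nlinarith [sq_nonneg (w - x)]
      unfold Psi
      split <;> (rw [abs_le]; constructor <;> nlinarith)
    simp only [hP0, sub_self, abs_zero, zero_mul, smul_zero, sub_zero]
    have : (w - x) ^ 2 / 2 ≤ c * |w - x| := by
      have h0 : |w - x| * |w - x| = (w - x) ^ 2 := by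
        rw [← abs_mul, abs_of_nonneg (mul_self_nonneg _)]; ring
      nlinarith [abs_nonneg (w - x)]
    calc ‖Psi x w‖ = |Psi x w| := rfl
      _ ≤ (w - x) ^ 2 / 2 := hb
      _ ≤ c * |w - x| := this
      _ = c * ‖w - x‖ := rfl
  · have hd : HasDerivAt (fun w => Real.exp (-(w - x) ^ 2 / 2) - 1)
        (Real.exp (-(v - x) ^ 2 / 2) * (-(2 * (v - x) ^ 1 * 1) / 2)) v :=
      (hsm v).sub_const 1
    have he : Psi x =ᶠ[nhds v] fun w => Real.exp (-(w - x) ^ 2 / 2) - 1 := by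
      filter_upwards [Iio_mem_nhds h] with w hw
      simp [Psi, (not_le.2 hw : ¬ x ≤ w)]
    have := hd.congr_of_eventuallyEq he
    refine this.congr_deriv ?_
    rw [abs_of_neg (sub_neg.2 h)]; ring

lemma sq_mul_exp_neg_le (z : ℝ) : z ^ 2 * Real.exp (-z ^ 2 / 2) ≤ 2 := by
  have h := Real.add_one_le_exp (z ^ 2 / 2)
  have hp : (0:ℝ) < Real.exp (z ^ 2 / 2) := Real.exp_pos _
  have hmul : Real.exp (z ^ 2 / 2) * Real.exp (-z ^ 2 / 2) = 1 := by
    rw [← Real.exp_add, show z ^ 2 / 2 + -z ^ 2 / 2 = 0 by ring, Real.exp_zero]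
  have h2 : 0 < Real.exp (-z ^ 2 / 2) := Real.exp_pos _
  nlinarith [sq_nonneg z]

lemma exp_neg_two_mul_int :
    IntegrableOn (fun t => Real.exp (-2 * t)) (Ioi (1:ℝ)) ∧
      (∫ t in Ioi (1:ℝ), Real.exp (-2 * t)) ≤ 1 := by
  have hderiv : ∀ t ∈ Ici (1:ℝ),
      HasDerivAt (fun s => -(Real.exp (-2 * s) / 2)) (Real.exp (-2 * t)) t := by
    intro t _
    have h := ((((hasDerivAt_id t).const_mul (-2)).exp).div_const 2).neg
    refine h.congr_deriv ?_
    simp only [id_eq]; ring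
  have hpos : ∀ t ∈ Ioi (1:ℝ), 0 ≤ Real.exp (-2 * t) := fun t _ => (Real.exp_pos _).le
  have htend : Tendsto (fun s => -(Real.exp (-2 * s) / 2)) atTop (𝓝 0) := by
    have h1 : Tendsto (fun s : ℝ => 2 * s) atTop atTop :=
      (tendsto_id.const_mul_atTop two_pos)
    have h2 : Tendsto (fun s : ℝ => Real.exp (-2 * s)) atTop (𝓝 0) := by
      have h := Real.tendsto_exp_neg_atTop_nhds_zero.comp h1
      exact h.congr (fun s => by simp [Function.comp, neg_mul])
    have := (h2.div_const 2).neg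
    simpa using this
  refine ⟨integrableOn_Ioi_deriv_of_nonneg' hderiv hpos htend, ?_⟩
  rw [integral_Ioi_of_hasDerivAt_of_nonneg' hderiv hpos htend]
  have hone : Real.exp (-2 * (1:ℝ)) ≤ 1 := by
    rw [Real.exp_le_one_iff]; norm_num
  have hpos1 : (0:ℝ) < Real.exp (-2 * (1:ℝ)) := Real.exp_pos _
  set y := Real.exp (-2 * (1:ℝ)) with hy
  linarith

lemma key_int (x u : ℝ) :
    IntegrableOn (fun t => Real.exp (-t) * |u| *
      (|Real.exp (-t) * u - x| * Real.exp (-(Real.exp (-t) * u - x) ^ 2 / 2))) (Ioi (1:ℝ)) ∧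
    (∫ t in Ioi (1:ℝ), Real.exp (-t) * |u| *
      (|Real.exp (-t) * u - x| * Real.exp (-(Real.exp (-t) * u - x) ^ 2 / 2))) ≤ 2 := by
  have hA : ∀ t : ℝ, HasDerivAt (fun s => Real.exp (-s) * u) (Real.exp (-t) * -1 * u) t :=
    fun t => ((hasDerivAt_id t).neg.exp.mul_const u)
  have hA0 : Tendsto (fun t : ℝ => Real.exp (-t) * u) atTop (𝓝 0) := by
    simpa using Real.tendsto_exp_neg_atTop_nhds_zero.mul_const u
  have hpos : ∀ t ∈ Ioi (1:ℝ), 0 ≤ Real.exp (-t) * |u| *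
      (|Real.exp (-t) * u - x| * Real.exp (-(Real.exp (-t) * u - x) ^ 2 / 2)) := by
    intro t _; positivity
  rcases le_or_gt 0 u with hu | hu
  · have hderiv : ∀ t ∈ Ici (1:ℝ), HasDerivAt (fun s => -Psi x (Real.exp (-s) * u))
        ((fun t => Real.exp (-t) * |u| *
          (|Real.exp (-t) * u - x| * Real.exp (-(Real.exp (-t) * u - x) ^ 2 / 2))) t) t := by
      intro t _
      have h := ((hasDerivAt_Psi x (Real.exp (-t) * u)).comp t (hA t)).neg
      refine h.congr_deriv ?_
      rw [abs_of_nonneg hu]; ring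
    have htend : Tendsto (fun s : ℝ => -Psi x (Real.exp (-s) * u)) atTop (𝓝 (-Psi x 0)) :=
      (((hasDerivAt_Psi x 0).continuousAt.tendsto).comp hA0).neg
    refine ⟨integrableOn_Ioi_deriv_of_nonneg' hderiv hpos htend, ?_⟩
    rw [integral_Ioi_of_hasDerivAt_of_nonneg' hderiv hpos htend]
    have h1 := abs_Psi_le x 0
    have h2 := abs_Psi_le x (Real.exp (-1) * u)
    rw [abs_le] at h1 h2
    linarith [h1.1, h1.2, h2.1, h2.2]
  · have hderiv : ∀ t ∈ Ici (1:ℝ), HasDerivAt (fun s => Psi x (Real.exp (-s) * u))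
        ((fun t => Real.exp (-t) * |u| *
          (|Real.exp (-t) * u - x| * Real.exp (-(Real.exp (-t) * u - x) ^ 2 / 2))) t) t := by
      intro t _
      have h := (hasDerivAt_Psi x (Real.exp (-t) * u)).comp t (hA t)
      refine h.congr_deriv ?_
      rw [abs_of_neg hu]; ring
    have htend : Tendsto (fun s : ℝ => Psi x (Real.exp (-s) * u)) atTop (𝓝 (Psi x 0)) :=
      ((hasDerivAt_Psi x 0).continuousAt.tendsto).comp hA0
    refine ⟨integrableOn_Ioi_deriv_of_nonneg' hderiv hpos htend, ?_⟩
    rw [integral_Ioi_of_hasDerivAt_of_nonneg' hderiv hpos htend]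
    have h1 := abs_Psi_le x 0
    have h2 := abs_Psi_le x (Real.exp (-1) * u)
    rw [abs_le] at h1 h2
    linarith [h1.1, h1.2, h2.1, h2.2]


lemma final_bound (c X e2 sv sq z a E E2 A : ℝ)
    (hc : 0 < c) (hX : 0 < X) (he2 : 0 < e2)
    (hsv0 : 0 < sv) (hsvc : c ≤ sv)
    (hsq0 : 0 < sq) (hsqc : c ≤ sq)
    (hE0 : 0 < E) (hE1 : E ≤ 1) (hEE2 : E ≤ E2) (hE20 : 0 < E2)
    (hz2 : z ^ 2 * E2 ≤ 2) (hA : |a| = A) :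
    |(-(X * e2 / sq ^ 3) * E + X / sq * (E * (z * a / sv + z ^ 2 * e2 / sv ^ 2)))|
      ≤ X * (3 / c ^ 3 * e2 + 1 / c ^ 2 * (A * (|z| * E2))) := by
  have hA0 : 0 ≤ A := hA ▸ abs_nonneg a
  have hz0 : 0 ≤ |z| := abs_nonneg z
  have hXsq : 0 ≤ X / sq := (div_pos hX hsq0).le
  -- step 1: triangle inequality
  have step1 : |(-(X * e2 / sq ^ 3) * E + X / sq * (E * (z * a / sv + z ^ 2 * e2 / sv ^ 2)))|
      ≤ X * e2 / sq ^ 3 * E +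
        (X / sq * (E * (|z| * A / sv)) + X / sq * (E * (z ^ 2 * e2 / sv ^ 2))) := by
    refine (abs_add_le _ _).trans (add_le_add ?_ ?_)
    · rw [abs_mul, abs_neg, abs_of_nonneg (div_pos (mul_pos hX he2) (pow_pos hsq0 3)).le,
        abs_of_pos hE0]
    · rw [abs_mul, abs_of_nonneg hXsq, abs_mul, abs_of_pos hE0,
        show X / sq * (E * (|z| * A / sv)) + X / sq * (E * (z ^ 2 * e2 / sv ^ 2))
          = X / sq * (E * (|z| * A / sv + z ^ 2 * e2 / sv ^ 2)) from by ring]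
      refine mul_le_mul_of_nonneg_left (mul_le_mul_of_nonneg_left ?_ hE0.le) hXsq
      refine (abs_add_le _ _).trans (add_le_add ?_ ?_)
      · rw [abs_div, abs_of_pos hsv0, abs_mul, hA]
      · rw [abs_of_nonneg (by positivity)]
  refine step1.trans ?_
  -- bound the three pieces
  have t1 : X * e2 / sq ^ 3 * E ≤ X / c ^ 3 * e2 := by
    calc X * e2 / sq ^ 3 * E ≤ X * e2 / sq ^ 3 * 1 :=
          mul_le_mul_of_nonneg_left hE1 (div_pos (mul_pos hX he2) (pow_pos hsq0 3)).le
      _ = X * e2 / sq ^ 3 := mul_one _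
      _ ≤ X * e2 / c ^ 3 :=
          div_le_div_of_nonneg_left (mul_pos hX he2).le (pow_pos hc 3)
            (pow_le_pow_left₀ hc.le hsqc 3)
      _ = X / c ^ 3 * e2 := by ring
  have t2 : X / sq * (E * (|z| * A / sv)) ≤ X / c * (E2 * (|z| * A / c)) := by
    have h1 : X / sq ≤ X / c := div_le_div_of_nonneg_left hX.le hc hsqc
    have h2 : |z| * A / sv ≤ |z| * A / c :=
      div_le_div_of_nonneg_left (mul_nonneg hz0 hA0) hc hsvc
    have h3 : E * (|z| * A / sv) ≤ E2 * (|z| * A / c) :=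
      mul_le_mul hEE2 h2 (by positivity) hE20.le
    exact mul_le_mul h1 h3 (by positivity) ((div_pos hX hc).le)
  have t3 : X / sq * (E * (z ^ 2 * e2 / sv ^ 2)) ≤ X / c * (2 * e2 / c ^ 2) := by
    have h1 : X / sq ≤ X / c := div_le_div_of_nonneg_left hX.le hc hsqc
    have h2 : E * (z ^ 2 * e2 / sv ^ 2) ≤ 2 * e2 / c ^ 2 := by
      have ha : E * (z ^ 2 * e2 / sv ^ 2) = (z ^ 2 * E) * e2 / sv ^ 2 := by ring
      have hb : z ^ 2 * E ≤ 2 := le_trans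
        (mul_le_mul_of_nonneg_left hEE2 (sq_nonneg z)) hz2
      rw [ha]
      have hnum : z ^ 2 * E * e2 ≤ 2 * e2 := mul_le_mul_of_nonneg_right hb he2.le
      calc z ^ 2 * E * e2 / sv ^ 2 ≤ 2 * e2 / sv ^ 2 := by
            exact div_le_div_of_nonneg_right hnum (pow_pos hsv0 2).le
        _ ≤ 2 * e2 / c ^ 2 :=
            div_le_div_of_nonneg_left (by positivity) (pow_pos hc 2)
              (pow_le_pow_left₀ hc.le hsvc 2)
    exact mul_le_mul h1 h2 (by positivity) ((div_pos hX hc).le)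
  calc X * e2 / sq ^ 3 * E +
        (X / sq * (E * (|z| * A / sv)) + X / sq * (E * (z ^ 2 * e2 / sv ^ 2)))
      ≤ X / c ^ 3 * e2 + (X / c * (E2 * (|z| * A / c)) + X / c * (2 * e2 / c ^ 2)) :=
        add_le_add t1 (add_le_add t2 t3)
    _ = X * (3 / c ^ 3 * e2 + 1 / c ^ 2 * (A * (|z| * E2))) := by
        field_simp
        ring

theorem mehler_time_deriv_integral_bound :
    ∃ C > (0:ℝ), ∀ x u : ℝ,
      ∫ t in Set.Ioi (1:ℝ), |deriv (fun s => mehlerK s x u) t| ≤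
        C * Real.exp (x ^ 2 / 2) := by
  set c : ℝ := 1 - Real.exp (-2) with hc_def
  have hexp2 : Real.exp (-2:ℝ) < 1 := by rw [Real.exp_lt_one_iff]; norm_num
  have hc : 0 < c := by rw [hc_def]; linarith
  have hc1 : c ≤ 1 := by have := Real.exp_pos (-2:ℝ); rw [hc_def]; linarith
  refine ⟨3 / c ^ 3 + 2 / c ^ 2, by positivity, fun x u => ?_⟩
  set X := Real.exp (x ^ 2 / 2) with hX
  have hXpos : 0 < X := Real.exp_pos _
  set g : ℝ → ℝ := fun t => X * ((3 / c ^ 3) * Real.exp (-2 * t) +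
      (1 / c ^ 2) * (Real.exp (-t) * |u| *
        (|Real.exp (-t) * u - x| * Real.exp (-(Real.exp (-t) * u - x) ^ 2 / 2)))) with hg
  have hg_int : IntegrableOn g (Ioi (1:ℝ)) := by
    apply Integrable.const_mul
    exact ((exp_neg_two_mul_int).1.const_mul _).add ((key_int x u).1.const_mul _)
  have hbound : ∀ t ∈ Ioi (1:ℝ), |deriv (fun s => mehlerK s x u) t| ≤ g t := by
    intro t ht
    have ht1 : (1:ℝ) < t := ht
    -- basic facts
    have he2pos : 0 < Real.exp (-2 * t) := Real.exp_pos _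
    have he2le : Real.exp (-2 * t) ≤ Real.exp (-2) := by
      apply Real.exp_le_exp.2; linarith
    have hσpos : 0 < 1 - Real.exp (-2 * t) := by
      have : Real.exp (-2 * t) < 1 := by rw [Real.exp_lt_one_iff]; linarith
      linarith
    have hσc : c ≤ 1 - Real.exp (-2 * t) := by rw [hc_def]; linarith
    have hσ1 : 1 - Real.exp (-2 * t) ≤ 1 := by linarith
    have hsσpos : 0 < Real.sqrt (1 - Real.exp (-2 * t)) := Real.sqrt_pos.2 hσpos
    have hcs : c ≤ Real.sqrt (1 - Real.exp (-2 * t)) := by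
      calc c = Real.sqrt (c ^ 2) := (Real.sqrt_sq hc.le).symm
        _ ≤ Real.sqrt (1 - Real.exp (-2 * t)) := Real.sqrt_le_sqrt (by nlinarith)
    -- derivative computation
    have hA : HasDerivAt (fun s => Real.exp (-s) * u) (Real.exp (-t) * -1 * u) t :=
      ((hasDerivAt_id t).neg.exp.mul_const u)
    have hσ' : HasDerivAt (fun s => 1 - Real.exp (-2 * s))
        (-(Real.exp (-2 * t) * (-2 * 1))) t :=
      (((hasDerivAt_id t).const_mul (-2)).exp).const_sub 1
    have hsqrtd : HasDerivAt (fun s => Real.sqrt (1 - Real.exp (-2 * s)))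
        ((-(Real.exp (-2 * t) * (-2 * 1))) / (2 * Real.sqrt (1 - Real.exp (-2 * t)))) t :=
      hσ'.sqrt (ne_of_gt hσpos)
    have hfrac : HasDerivAt (fun s => X / Real.sqrt (1 - Real.exp (-2 * s)))
        ((0 * Real.sqrt (1 - Real.exp (-2 * t)) - X *
          ((-(Real.exp (-2 * t) * (-2 * 1))) / (2 * Real.sqrt (1 - Real.exp (-2 * t))))) /
            Real.sqrt (1 - Real.exp (-2 * t)) ^ 2) t :=
      (hasDerivAt_const t X).div hsqrtd (ne_of_gt hsσpos)
    have hz2 := ((hA.sub_const x).pow 2).neg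
    have hden := hσ'.const_mul 2
    have hp := hz2.div hden (by positivity : (2:ℝ) * (1 - Real.exp (-2 * t)) ≠ 0)
    have hexpd := hp.exp
    have hF : HasDerivAt (fun s => mehlerK s x u) _ t := hfrac.mul hexpd
    have hsσne : Real.sqrt (1 - Real.exp (-2 * t)) ≠ 0 := ne_of_gt hsσpos
    have hσne : (1 - Real.exp (-2 * t)) ≠ 0 := ne_of_gt hσpos
    have hEq : deriv (fun s => mehlerK s x u) t =
        -(X * Real.exp (-2 * t) / Real.sqrt (1 - Real.exp (-2 * t)) ^ 3) *
            Real.exp (-(Real.exp (-t) * u - x) ^ 2 / (2 * (1 - Real.exp (-2 * t)))) +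
          X / Real.sqrt (1 - Real.exp (-2 * t)) *
            (Real.exp (-(Real.exp (-t) * u - x) ^ 2 / (2 * (1 - Real.exp (-2 * t)))) *
              ((Real.exp (-t) * u - x) * (Real.exp (-t) * u) / (1 - Real.exp (-2 * t)) +
               (Real.exp (-t) * u - x) ^ 2 * Real.exp (-2 * t) / (1 - Real.exp (-2 * t)) ^ 2)) := by
      rw [hF.deriv]
      simp only [Pi.div_apply, Pi.neg_apply, Pi.pow_apply]
      set EE := Real.exp (-(Real.exp (-t) * u - x) ^ 2 / (2 * (1 - Real.exp (-2 * t)))) with hEEd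
      set aa := Real.exp (-t) with haad
      set sq := Real.sqrt (1 - Real.exp (-2 * t)) with hsqd
      set ee := Real.exp (-2 * t) with heed
      field_simp
      ring
    rw [hEq]
    simp only [hg]
    have hE1' : Real.exp (-(Real.exp (-t) * u - x) ^ 2 / (2 * (1 - Real.exp (-2 * t)))) ≤ 1 := by
      apply Real.exp_le_one_iff.2
      apply div_nonpos_of_nonpos_of_nonneg
      · exact neg_nonpos.2 (sq_nonneg _)
      · positivity
    have hEE2' : Real.exp (-(Real.exp (-t) * u - x) ^ 2 / (2 * (1 - Real.exp (-2 * t)))) ≤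
        Real.exp (-(Real.exp (-t) * u - x) ^ 2 / 2) := by
      apply Real.exp_le_exp.2
      rw [div_le_div_iff₀ (by positivity) two_pos]
      nlinarith [sq_nonneg (Real.exp (-t) * u - x)]
    have hz2' : (Real.exp (-t) * u - x) ^ 2 * Real.exp (-(Real.exp (-t) * u - x) ^ 2 / 2) ≤ 2 :=
      sq_mul_exp_neg_le _
    have hA' : |Real.exp (-t) * u| = Real.exp (-t) * |u| := by
      rw [abs_mul, abs_of_pos (Real.exp_pos _)]
    exact final_bound c X (Real.exp (-2 * t)) (1 - Real.exp (-2 * t))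
        (Real.sqrt (1 - Real.exp (-2 * t))) (Real.exp (-t) * u - x) (Real.exp (-t) * u)
        (Real.exp (-(Real.exp (-t) * u - x) ^ 2 / (2 * (1 - Real.exp (-2 * t)))))
        (Real.exp (-(Real.exp (-t) * u - x) ^ 2 / 2)) (Real.exp (-t) * |u|)
        hc hXpos he2pos hσpos hσc hsσpos hcs (Real.exp_pos _) hE1' hEE2' (Real.exp_pos _)
        hz2' hA'
  have h1 : ∫ t in Ioi (1:ℝ), |deriv (fun s => mehlerK s x u) t| ≤ ∫ t in Ioi (1:ℝ), g t := by
    apply integral_mono_of_nonneg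
    · exact ae_of_all _ fun t => abs_nonneg _
    · exact hg_int
    · exact (ae_restrict_iff' measurableSet_Ioi).2 (ae_of_all _ hbound)
  have h2 : ∫ t in Ioi (1:ℝ), g t ≤ (3 / c ^ 3 + 2 / c ^ 2) * X := by
    rw [hg]
    rw [MeasureTheory.integral_const_mul]
    rw [integral_add ((exp_neg_two_mul_int).1.const_mul _) ((key_int x u).1.const_mul _),
        MeasureTheory.integral_const_mul, MeasureTheory.integral_const_mul]
    have i1 := (exp_neg_two_mul_int).2
    have i2 := (key_int x u).2
    have c3 : (0:ℝ) < 3 / c ^ 3 := by positivity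
    have c2 : (0:ℝ) < 1 / c ^ 2 := by positivity
    have e1 : (3 / c ^ 3) * (∫ t in Ioi (1:ℝ), Real.exp (-2 * t)) ≤ 3 / c ^ 3 := by
      nlinarith
    have e2 : (1 / c ^ 2) * (∫ t in Ioi (1:ℝ), Real.exp (-t) * |u| *
        (|Real.exp (-t) * u - x| * Real.exp (-(Real.exp (-t) * u - x) ^ 2 / 2))) ≤ 2 / c ^ 2 := by
      rw [show (2:ℝ) / c ^ 2 = (1 / c ^ 2) * 2 by ring]
      exact mul_le_mul_of_nonneg_left i2 c2.le
    nlinarith [mul_le_mul_of_nonneg_left (add_le_add e1 e2) hXpos.le]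
  linarith
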